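/- For every n ≥ 1, the permutohedron Π_{n−1} equals the set of all x ∈ ℝ^n such that ∑_{i=1}^{n} x_i = n(n+1)/2 and, for every nonempty proper subset S ⊆ {1,…,n} with |S| = k, ∑_{i∈S} x_i ≥ k(k+1)/2. That is, Π_{n−1} is the intersection of the affine hyperplane 𝔸^{n−1} with the 2^n − 2 half-spaces H_S. -/

import Mathlib

open Finset

noncomputable def permuVertex (n : ℕ) (σ : Equiv.Perm (Fin n)) : Fin n → ℝ :=
  fun i => ((σ⁻¹ i : ℕ) : ℝ) + 1

noncomputable def permutohedron (n : ℕ) : Set (Fin n → ℝ) :=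
  convexHull ℝ (Set.range (permuVertex n))

namespace PermuAux

/-- `g k = k(k+1)/2` as a real number. -/
noncomputable def g (k : ℕ) : ℝ := (k : ℝ) * ((k : ℝ) + 1) / 2

variable {n : ℕ}

/-- membership in the H-description, in a uniform form. -/
def inP (n : ℕ) (x : Fin n → ℝ) : Prop :=
  (∀ S : Finset (Fin n), g S.card ≤ ∑ i ∈ S, x i) ∧
    (∑ i, x i = g n)

def tight (x : Fin n → ℝ) (S : Finset (Fin n)) : Prop :=
  ∑ i ∈ S, x i = g S.card

lemma g_zero : g 0 = 0 := by simp [g]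

lemma tight_empty (x : Fin n → ℝ) : tight x ∅ := by simp [tight, g]

lemma tight_univ {x : Fin n → ℝ} (hx : inP n x) : tight x Finset.univ := by
  simpa [tight, Finset.card_univ] using hx.2

lemma int_convex {a b p q : ℤ} (h1 : p ≤ a) (h2 : p ≤ b) (h3 : p + q = a + b) :
    a * (a + 1) + b * (b + 1) ≤ p * (p + 1) + q * (q + 1) := by
  obtain rfl : q = a + b - p := by linarith
  nlinarith [mul_nonneg (sub_nonneg.2 h1) (sub_nonneg.2 h2)]

lemma int_convex_strict {a b p q : ℤ} (h1 : p < a) (h2 : p < b) (h3 : p + q = a + b) :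
    a * (a + 1) + b * (b + 1) < p * (p + 1) + q * (q + 1) := by
  obtain rfl : q = a + b - p := by linarith
  nlinarith [mul_pos (sub_pos.2 h1) (sub_pos.2 h2)]

lemma g_convex (S T : Finset (Fin n)) :
    g S.card + g T.card ≤ g (S ∩ T).card + g (S ∪ T).card := by
  have hc : (S ∩ T).card + (S ∪ T).card = S.card + T.card :=
    Finset.card_inter_add_card_union S T
  have h1 : (S ∩ T).card ≤ S.card := Finset.card_le_card Finset.inter_subset_left
  have h2 : (S ∩ T).card ≤ T.card := Finset.card_le_card Finset.inter_subset_right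
  have := int_convex (a := S.card) (b := T.card) (p := (S ∩ T).card) (q := (S ∪ T).card)
    (by exact_mod_cast h1) (by exact_mod_cast h2) (by exact_mod_cast hc)
  unfold g
  have : ((S.card : ℝ)) * (S.card + 1) + T.card * (T.card + 1) ≤
      ((S ∩ T).card : ℝ) * ((S ∩ T).card + 1) + ((S ∪ T).card : ℝ) * ((S ∪ T).card + 1) := by
    exact_mod_cast this
  linarith

lemma g_convex_strict {S T : Finset (Fin n)} (h1 : ¬ S ⊆ T) (h2 : ¬ T ⊆ S) :
    g S.card + g T.card < g (S ∩ T).card + g (S ∪ T).card := by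
  have hc : (S ∩ T).card + (S ∪ T).card = S.card + T.card :=
    Finset.card_inter_add_card_union S T
  have hs1 : (S ∩ T).card < S.card := by
    refine Finset.card_lt_card ⟨Finset.inter_subset_left, fun hss => ?_⟩
    exact h1 fun a ha => (Finset.mem_inter.1 (hss ha)).2
  have hs2 : (S ∩ T).card < T.card := by
    refine Finset.card_lt_card ⟨Finset.inter_subset_right, fun hss => ?_⟩
    exact h2 fun a ha => (Finset.mem_inter.1 (hss ha)).1
  have := int_convex_strict (a := S.card) (b := T.card) (p := (S ∩ T).card)
    (q := (S ∪ T).card) (by exact_mod_cast hs1) (by exact_mod_cast hs2) (by exact_mod_cast hc)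
  unfold g
  have : ((S.card : ℝ)) * (S.card + 1) + T.card * (T.card + 1) <
      ((S ∩ T).card : ℝ) * ((S ∩ T).card + 1) + ((S ∪ T).card : ℝ) * ((S ∪ T).card + 1) := by
    exact_mod_cast this
  linarith

lemma uncross {x : Fin n → ℝ} (hx : inP n x) {S T : Finset (Fin n)}
    (hS : tight x S) (hT : tight x T) :
    tight x (S ∩ T) ∧ tight x (S ∪ T) ∧ (S ⊆ T ∨ T ⊆ S) := by
  have hadd : (∑ i ∈ S ∪ T, x i) + ∑ i ∈ S ∩ T, x i = (∑ i ∈ S, x i) + ∑ i ∈ T, x i :=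
    Finset.sum_union_inter
  have h1 := hx.1 (S ∩ T)
  have h2 := hx.1 (S ∪ T)
  have hg := g_convex S T
  unfold tight at *
  refine ⟨by linarith, by linarith, ?_⟩
  by_contra hcon
  push_neg at hcon
  have := g_convex_strict hcon.1 hcon.2
  linarith

lemma mem_inf_id {F : Finset (Finset (Fin n))} {j : Fin n} :
    j ∈ F.inf id ↔ ∀ S ∈ F, j ∈ S := by
  classical
  induction F using Finset.induction with
  | empty => simp
  | insert h ih => simp [Finset.inf_insert, *]

lemma tight_inf {x : Fin n → ℝ} (hx : inP n x) (F : Finset (Finset (Fin n)))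
    (hne : F.Nonempty) (hF : ∀ S ∈ F, tight x S) : tight x (F.inf id) := by
  classical
  induction hne using Finset.Nonempty.cons_induction with
  | singleton a => simpa using hF a (by simp)
  | cons a s ha hs ih =>
    rw [Finset.inf_cons]
    have h1 : tight x a := hF a (by simp)
    have h2 : tight x (s.inf id) := ih fun S hS => hF S (by simp [hS])
    exact (uncross hx h1 h2).1

lemma tight_sup {x : Fin n → ℝ} (hx : inP n x) (F : Finset (Finset (Fin n)))
    (hF : ∀ S ∈ F, tight x S) : tight x (F.sup id) := by
  classical
  induction F using Finset.induction with
  | empty => simpa using tight_empty x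
  | @insert a s ha ih =>
    rw [Finset.sup_insert]
    have h1 : tight x a := hF a (by simp)
    have h2 : tight x (s.sup id) := ih fun S hS => hF S (by simp [hS])
    exact (uncross hx h1 h2).2.1

end PermuAux
-- appended part (vertex case)
namespace PermuAux

variable {n : ℕ}

open Classical in
/-- the minimal tight set containing `i`. -/
noncomputable def Tset (x : Fin n → ℝ) (i : Fin n) : Finset (Fin n) :=
  ((Finset.univ : Finset (Finset (Fin n))).filter (fun S => tight x S ∧ i ∈ S)).inf id

lemma mem_Tset_iff {x : Fin n → ℝ} {i j : Fin n} :
    j ∈ Tset x i ↔ ∀ S : Finset (Fin n), tight x S → i ∈ S → j ∈ S := by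
  classical
  simp [Tset, mem_inf_id]

lemma self_mem_Tset {x : Fin n → ℝ} (i : Fin n) : i ∈ Tset x i :=
  mem_Tset_iff.2 fun _ _ h => h

lemma Tset_tight {x : Fin n → ℝ} (hx : inP n x) (i : Fin n) : tight x (Tset x i) := by
  classical
  exact tight_inf hx _ ⟨Finset.univ, by simp [tight_univ hx]⟩
    (fun S hS => ((Finset.mem_filter.1 hS).2).1)

lemma Tset_subset {x : Fin n → ℝ} {i : Fin n} {S : Finset (Fin n)}
    (hS : tight x S) (hi : i ∈ S) : Tset x i ⊆ S := by
  intro k hk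
  exact mem_Tset_iff.1 hk S hS hi

lemma Tset_mono {x : Fin n → ℝ} {i j : Fin n} (h : j ∈ Tset x i) :
    Tset x j ⊆ Tset x i := by
  intro k hk
  refine mem_Tset_iff.2 fun S hS hiS => ?_
  exact mem_Tset_iff.1 hk S hS (mem_Tset_iff.1 h S hS hiS)

/-- separation hypothesis for the vertex case -/
def Sep (x : Fin n → ℝ) : Prop :=
  ∀ i j : Fin n, i ≠ j → ∃ S : Finset (Fin n),
    tight x S ∧ ((i ∈ S ∧ j ∉ S) ∨ (j ∈ S ∧ i ∉ S))

lemma sep_out {x : Fin n → ℝ} (hsep : Sep x) {i j : Fin n} (hij : i ≠ j)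
    (hj : j ∈ Tset x i) : i ∉ Tset x j := by
  obtain ⟨S, hS, hcase⟩ := hsep i j hij
  rcases hcase with ⟨hiS, hjS⟩ | ⟨hjS, hiS⟩
  · exact absurd (mem_Tset_iff.1 hj S hS hiS) hjS
  · intro hi
    exact hiS (mem_Tset_iff.1 hi S hS hjS)

lemma Tset_erase_tight {x : Fin n → ℝ} (hx : inP n x) (hsep : Sep x) (i : Fin n) :
    tight x ((Tset x i).erase i) := by
  classical
  set U := (Tset x i).erase i with hU
  have hUeq : U = (U.image (Tset x)).sup id := by
    apply Finset.Subset.antisymm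
    · intro j hj
      have h := Finset.le_sup (f := id) (Finset.mem_image_of_mem (Tset x) hj)
      exact h (self_mem_Tset j)
    · show (U.image (Tset x)).sup id ≤ U
      apply Finset.sup_le
      intro V hV
      obtain ⟨j, hj, rfl⟩ := Finset.mem_image.1 hV
      have hjT : j ∈ Tset x i := Finset.mem_of_mem_erase hj
      have hji : j ≠ i := Finset.ne_of_mem_erase hj
      have hsub : Tset x j ⊆ Tset x i := Tset_mono hjT
      have hi_not : i ∉ Tset x j := sep_out hsep (Ne.symm hji) hjT
      intro k hk
      exact Finset.mem_erase.2 ⟨fun hki => hi_not (hki ▸ hk), hsub hk⟩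
  rw [hUeq]
  apply tight_sup hx
  intro S hS
  obtain ⟨j, _, rfl⟩ := Finset.mem_image.1 hS
  exact Tset_tight hx j

lemma g_succ_diff (m : ℕ) : g (m + 1) - g m = (m : ℝ) + 1 := by
  unfold g; push_cast; ring

lemma x_eq_card {x : Fin n → ℝ} (hx : inP n x) (hsep : Sep x) (i : Fin n) :
    x i = ((Tset x i).card : ℝ) := by
  classical
  have hi : i ∈ Tset x i := self_mem_Tset i
  have h1 : tight x (Tset x i) := Tset_tight hx i
  have h2 : tight x ((Tset x i).erase i) := Tset_erase_tight hx hsep i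
  have hsum : x i + ∑ j ∈ (Tset x i).erase i, x j = ∑ j ∈ Tset x i, x j :=
    Finset.add_sum_erase _ x hi
  have hcard : (Tset x i).card = ((Tset x i).erase i).card + 1 := by
    rw [Finset.card_erase_of_mem hi]
    have : 1 ≤ (Tset x i).card := Finset.card_pos.2 ⟨i, hi⟩
    omega
  unfold tight at h1 h2
  rw [h1, h2] at hsum
  have hc : ((Tset x i).card : ℝ) = (((Tset x i).erase i).card : ℝ) + 1 := by
    exact_mod_cast hcard
  rw [hcard] at hsum
  rw [hc]
  linarith [g_succ_diff ((Tset x i).erase i).card]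

lemma card_Tset_inj {x : Fin n → ℝ} (hx : inP n x) (hsep : Sep x) {i j : Fin n}
    (hij : i ≠ j) : (Tset x i).card ≠ (Tset x j).card := by
  have hcomp := (uncross hx (Tset_tight hx i) (Tset_tight hx j)).2.2
  intro hcard
  have heq : Tset x i = Tset x j := by
    rcases hcomp with h | h
    · exact Finset.eq_of_subset_of_card_le h (le_of_eq hcard.symm)
    · exact (Finset.eq_of_subset_of_card_le h (le_of_eq hcard)).symm
  have hj : j ∈ Tset x i := heq ▸ self_mem_Tset j
  have := sep_out hsep hij hj
  exact this (heq ▸ self_mem_Tset i)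

lemma vertex_case {x : Fin n → ℝ} (hx : inP n x) (hsep : Sep x) :
    ∃ σ : Equiv.Perm (Fin n), x = permuVertex n σ := by
  classical
  have hcard_pos : ∀ i, 1 ≤ (Tset x i).card :=
    fun i => Finset.card_pos.2 ⟨i, self_mem_Tset i⟩
  have hcard_le : ∀ i, (Tset x i).card ≤ n := by
    intro i
    simpa using Finset.card_le_univ (Tset x i)
  let e : Fin n → Fin n := fun i => ⟨(Tset x i).card - 1, by
    have := hcard_pos i; have := hcard_le i; omega⟩
  have hinj : Function.Injective e := by
    intro i j hij
    by_contra hne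
    apply card_Tset_inj hx hsep hne
    have := congrArg Fin.val hij
    simp only [e] at this
    have h1 := hcard_pos i; have h2 := hcard_pos j
    omega
  have hbij : Function.Bijective e := (Finite.injective_iff_bijective).1 hinj
  refine ⟨(Equiv.ofBijective e hbij).symm, ?_⟩
  funext i
  have : ((Equiv.ofBijective e hbij).symm)⁻¹ i = e i := by
    simp [Equiv.Perm.inv_def]
  rw [permuVertex, this]
  have h1 := hcard_pos i
  have : ((e i : ℕ) : ℝ) + 1 = ((Tset x i).card : ℝ) := by
    simp only [e]
    have : ((Tset x i).card - 1 : ℕ) + 1 = (Tset x i).card := by omega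
    exact_mod_cast congrArg (Nat.cast : ℕ → ℝ) this
  rw [this, ← x_eq_card hx hsep i]

end PermuAux
namespace PermuAux

variable {n : ℕ}

/-- direction vector `e_i - e_j`. -/
noncomputable def dvec (i j : Fin n) : Fin n → ℝ :=
  fun k => (if k = i then (1:ℝ) else 0) - (if k = j then (1:ℝ) else 0)

lemma sum_dvec {i j : Fin n} (S : Finset (Fin n)) :
    ∑ k ∈ S, dvec i j k =
      (if i ∈ S then (1:ℝ) else 0) - (if j ∈ S then (1:ℝ) else 0) := by
  classical
  unfold dvec
  rw [Finset.sum_sub_distrib, Finset.sum_ite_eq' S i (fun _ => (1:ℝ)),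
    Finset.sum_ite_eq' S j (fun _ => (1:ℝ))]

open Classical in
/-- the family of non-tight sets. -/
noncomputable def nontight (x : Fin n → ℝ) : Finset (Finset (Fin n)) :=
  (Finset.univ : Finset (Finset (Fin n))).filter (fun S => ¬ tight x S)

lemma step {x : Fin n → ℝ} (hx : inP n x) {i j : Fin n} (hij : i ≠ j)
    (hns : ∀ S : Finset (Fin n), tight x S → (i ∈ S ↔ j ∈ S)) :
    ∃ t : ℝ, 0 < t ∧ inP n (x + t • dvec i j) ∧
      nontight (x + t • dvec i j) ⊂ nontight x := by
  classical
  set A : Finset (Finset (Fin n)) :=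
    (Finset.univ : Finset (Finset (Fin n))).filter (fun S => j ∈ S ∧ i ∉ S) with hA
  have hjA : ({j} : Finset (Fin n)) ∈ A := by
    simp only [hA, Finset.mem_filter, Finset.mem_univ, Finset.mem_singleton, true_and]
    exact hij
  have hAne : A.Nonempty := ⟨_, hjA⟩
  set slack : Finset (Fin n) → ℝ := fun S => (∑ k ∈ S, x k) - g S.card with hslack
  set t := A.inf' hAne slack with ht
  have hmemA : ∀ S ∈ A, j ∈ S ∧ i ∉ S := by
    intro S hS; exact (Finset.mem_filter.1 hS).2
  have hpos : 0 < t := by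
    rw [ht, Finset.lt_inf'_iff]
    intro S hS
    obtain ⟨hjS, hiS⟩ := hmemA S hS
    have hnt : ¬ tight x S := by
      intro h
      exact hiS ((hns S h).2 hjS)
    have := hx.1 S
    unfold tight at hnt
    simp only [hslack]
    rcases lt_or_eq_of_le this with h | h
    · linarith
    · exact absurd h.symm hnt
  set y := x + t • dvec i j with hy
  have hysum : ∀ S : Finset (Fin n), ∑ k ∈ S, y k =
      (∑ k ∈ S, x k) + t * ((if i ∈ S then (1:ℝ) else 0) - (if j ∈ S then (1:ℝ) else 0)) := by
    intro S
    simp only [hy, Pi.add_apply, Pi.smul_apply, smul_eq_mul]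
    rw [Finset.sum_add_distrib, ← Finset.mul_sum, sum_dvec]
  have hy_eq_tight : ∀ S : Finset (Fin n), tight x S → tight y S := by
    intro S hS
    have hiff := hns S hS
    unfold tight at *
    rw [hysum S]
    by_cases hiS : i ∈ S
    · have : j ∈ S := hiff.1 hiS
      simp [hiS, this, hS]
    · have : j ∉ S := fun h => hiS (hiff.2 h)
      simp [hiS, this, hS]
  have hyP : inP n y := by
    constructor
    · intro S
      rw [hysum S]
      by_cases hiS : i ∈ S <;> by_cases hjS : j ∈ S
      · rw [if_pos hiS, if_pos hjS]
        have := hx.1 S; linarith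
      · rw [if_pos hiS, if_neg hjS]
        have := hx.1 S; linarith
      · -- j ∈ S, i ∉ S : S ∈ A
        have hSA : S ∈ A := by simp [hA, hjS, hiS]
        have hle : t ≤ slack S := Finset.inf'_le slack hSA
        simp only [hslack] at hle
        rw [if_neg hiS, if_pos hjS]
        linarith
      · rw [if_neg hiS, if_neg hjS]
        have := hx.1 S; linarith
    · have := tight_univ hx
      have h2 := hy_eq_tight Finset.univ this
      unfold tight at h2
      simpa [Finset.card_univ] using h2
  refine ⟨t, hpos, hyP, ?_⟩
  constructor
  · intro S hS
    simp only [nontight, Finset.mem_filter, Finset.mem_univ, true_and] at hS ⊢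
    intro hxt
    exact hS (hy_eq_tight S hxt)
  · obtain ⟨S₀, hS₀A, hS₀⟩ := Finset.exists_mem_eq_inf' hAne slack
    obtain ⟨hjS₀, hiS₀⟩ := hmemA S₀ hS₀A
    intro hsub
    have hS₀x : ¬ tight x S₀ := by
      intro h
      exact hiS₀ ((hns S₀ h).2 hjS₀)
    have hS₀y : tight y S₀ := by
      unfold tight
      rw [hysum S₀]
      simp only [if_neg hiS₀, if_pos hjS₀]
      have : t = (∑ k ∈ S₀, x k) - g S₀.card := by rw [ht, hS₀]
      linarith
    have : S₀ ∈ nontight y := hsub (by simp [nontight, hS₀x])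
    simp only [nontight, Finset.mem_filter, Finset.mem_univ, true_and] at this
    exact this hS₀y

lemma main_induction (N : ℕ) : ∀ x : Fin n → ℝ, inP n x → (nontight x).card ≤ N →
    x ∈ convexHull ℝ (Set.range (permuVertex n)) := by
  induction N with
  | zero =>
    intro x hx hcard
    by_cases hsep : Sep x
    · obtain ⟨σ, rfl⟩ := vertex_case hx hsep
      exact subset_convexHull ℝ _ ⟨σ, rfl⟩
    · exfalso
      unfold Sep at hsep
      push_neg at hsep
      obtain ⟨i, j, hij, hforall⟩ := hsep
      have hns : ∀ S : Finset (Fin n), tight x S → (i ∈ S ↔ j ∈ S) :=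
        fun S hS => ⟨(hforall S hS).1, (hforall S hS).2⟩
      obtain ⟨t, hpos, hyP, hss⟩ := step hx hij hns
      have := Finset.card_lt_card hss
      omega
  | succ N ih =>
    intro x hx hcard
    by_cases hsep : Sep x
    · obtain ⟨σ, rfl⟩ := vertex_case hx hsep
      exact subset_convexHull ℝ _ ⟨σ, rfl⟩
    · unfold Sep at hsep
      push_neg at hsep
      obtain ⟨i, j, hij, hforall⟩ := hsep
      have hns : ∀ S : Finset (Fin n), tight x S → (i ∈ S ↔ j ∈ S) :=
        fun S hS => ⟨(hforall S hS).1, (hforall S hS).2⟩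
      have hns' : ∀ S : Finset (Fin n), tight x S → (j ∈ S ↔ i ∈ S) :=
        fun S hS => (hns S hS).symm
      obtain ⟨t, htpos, hyP, hyss⟩ := step hx hij hns
      obtain ⟨s, hspos, hzP, hzss⟩ := step hx hij.symm hns'
      set y := x + t • dvec i j with hy
      set z := x + s • dvec j i with hz
      have hymem : y ∈ convexHull ℝ (Set.range (permuVertex n)) := by
        apply ih y hyP
        have := Finset.card_lt_card hyss
        omega
      have hzmem : z ∈ convexHull ℝ (Set.range (permuVertex n)) := by
        apply ih z hzP
        have := Finset.card_lt_card hzss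
        omega
      have hts : 0 < t + s := by linarith
      have hcomb : x = (s / (t + s)) • y + (t / (t + s)) • z := by
        funext k
        simp only [hy, hz, Pi.add_apply, Pi.smul_apply, smul_eq_mul, dvec]
        field_simp
        ring
      rw [hcomb]
      exact (convex_convexHull ℝ _) hymem hzmem
        (by positivity) (by positivity)
        (by rw [← add_div, add_comm s t]; exact div_self hts.ne')

end PermuAux
namespace PermuAux

variable {n : ℕ}

lemma gauss_sum (m : ℕ) : 2 * ∑ k ∈ Finset.range m, (k + 1) = m * (m + 1) := by
  induction m with
  | zero => simp
  | succ m ih => rw [Finset.sum_range_succ, Nat.mul_add, ih]; ring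

lemma nat_distinct_sum (T : Finset ℕ) (h0 : 0 ∉ T) :
    T.card * (T.card + 1) ≤ 2 * ∑ t ∈ T, t := by
  classical
  induction T using Finset.strongInduction with
  | _ T ih =>
    rcases T.eq_empty_or_nonempty with rfl | hne
    · simp
    · have h0T : 0 ∉ T := h0
      set m := T.max' hne with hm
      have hmT : m ∈ T := T.max'_mem hne
      have hsub : T ⊆ Finset.Icc 1 m := by
        intro t ht
        refine Finset.mem_Icc.2 ⟨?_, T.le_max' t ht⟩
        rcases Nat.eq_zero_or_pos t with rfl | h
        · exact absurd ht h0T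
        · exact h
      have hcard : T.card ≤ m := by
        have := Finset.card_le_card hsub
        simpa [Nat.card_Icc] using this
      have herase := ih (T.erase m) (Finset.erase_ssubset hmT)
        (fun h => h0T (Finset.mem_of_mem_erase h))
      have hsum : m + ∑ t ∈ T.erase m, t = ∑ t ∈ T, t :=
        Finset.add_sum_erase T (fun t => t) hmT
      have hce : (T.erase m).card = T.card - 1 := Finset.card_erase_of_mem hmT
      have hpos : 1 ≤ T.card := Finset.card_pos.2 hne
      rw [hce] at herase
      obtain ⟨c, hc⟩ : ∃ c, T.card = c + 1 := ⟨T.card - 1, by omega⟩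
      rw [hc] at herase ⊢
      simp only [Nat.add_sub_cancel] at herase
      rw [show (c + 1) * (c + 1 + 1) = c * (c + 1) + 2 * (c + 1) from by ring]
      rw [hc] at hcard
      linarith


lemma vertex_inP (σ : Equiv.Perm (Fin n)) : inP n (permuVertex n σ) := by
  classical
  constructor
  · intro S
    set T : Finset ℕ := S.image (fun i => (σ⁻¹ i : ℕ) + 1) with hT
    have hinj : Set.InjOn (fun i => ((σ⁻¹ i : Fin n) : ℕ) + 1) S := by
      intro a _ b _ hab
      simp only [add_left_injective] at hab
      have : (σ⁻¹ a : Fin n) = σ⁻¹ b := Fin.val_injective (by omega)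
      simpa using (Equiv.injective σ⁻¹) this
    have hcard : T.card = S.card := Finset.card_image_of_injOn hinj
    have h0 : 0 ∉ T := by
      simp only [hT, Finset.mem_image, not_exists]
      intro i _
      omega
    have hkey := nat_distinct_sum T h0
    rw [hcard] at hkey
    have hsum : ∑ i ∈ S, permuVertex n σ i = ((∑ t ∈ T, t : ℕ) : ℝ) := by
      rw [hT, Finset.sum_image hinj, Nat.cast_sum]
      exact Finset.sum_congr rfl fun i _ => by unfold permuVertex; push_cast; ring
    rw [hsum]
    unfold g
    have h2 : ((S.card * (S.card + 1) : ℕ) : ℝ) ≤ ((2 * ∑ t ∈ T, t : ℕ) : ℝ) :=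
      Nat.cast_le.mpr hkey
    rw [Nat.cast_mul, Nat.cast_mul, Nat.cast_add, Nat.cast_one] at h2
    rw [Nat.cast_ofNat] at h2
    linarith
  · have hre : ∑ i, permuVertex n σ i = ∑ i : Fin n, ((i : ℕ) + 1 : ℝ) := by
      unfold permuVertex
      rw [← Equiv.sum_comp σ⁻¹ (fun i => ((i : ℕ) : ℝ) + 1)]
    rw [hre]
    have h2 : ∑ i : Fin n, (((i : ℕ) + 1 : ℕ) : ℝ) = (((∑ k ∈ Finset.range n, (k + 1)) : ℕ) : ℝ) := by
      rw [← Fin.sum_univ_eq_sum_range]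
      push_cast
      rfl
    have := gauss_sum n
    unfold g
    push_cast at h2 ⊢
    rw [h2]
    have : ((2 * ∑ k ∈ Finset.range n, (k + 1) : ℕ) : ℝ) = ((n * (n + 1) : ℕ) : ℝ) := by
      exact_mod_cast congrArg (Nat.cast : ℕ → ℝ) this
    push_cast at this
    linarith

end PermuAux

open PermuAux in
theorem statement1 (n : ℕ) (hn : 1 ≤ n) :
    permutohedron n =
      {x : Fin n → ℝ |
        (∑ i, x i = ((n : ℝ) * ((n : ℝ) + 1)) / 2) ∧
        ∀ S : Finset (Fin n), S.Nonempty → S ≠ Finset.univ →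
          ((S.card : ℝ) * ((S.card : ℝ) + 1)) / 2 ≤ ∑ i ∈ S, x i} := by
  classical
  have hiff : ∀ x : Fin n → ℝ, x ∈
      {x : Fin n → ℝ |
        (∑ i, x i = ((n : ℝ) * ((n : ℝ) + 1)) / 2) ∧
        ∀ S : Finset (Fin n), S.Nonempty → S ≠ Finset.univ →
          ((S.card : ℝ) * ((S.card : ℝ) + 1)) / 2 ≤ ∑ i ∈ S, x i} ↔ inP n x := by
    intro x
    constructor
    · rintro ⟨h1, h2⟩
      constructor
      · intro S
        rcases S.eq_empty_or_nonempty with rfl | hne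
        · simp [g]
        · by_cases hu : S = Finset.univ
          · subst hu
            rw [show g (Finset.univ : Finset (Fin n)).card = g n by
              rw [Finset.card_univ, Fintype.card_fin]]
            unfold g
            rw [h1]
          · exact h2 S hne hu
      · unfold g; rw [h1]
    · rintro ⟨h1, h2⟩
      refine ⟨by unfold g at h2; rw [h2], fun S _ _ => h1 S⟩
  ext x
  constructor
  · intro hx
    rw [hiff]
    have hconv : Convex ℝ {x : Fin n → ℝ | inP n x} := by
      intro u hu v hv a b ha hb hab
      constructor
      · intro S
        have h1 := hu.1 S
        have h2 := hv.1 S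
        have : ∑ i ∈ S, (a • u + b • v) i = a * ∑ i ∈ S, u i + b * ∑ i ∈ S, v i := by
          simp only [Pi.add_apply, Pi.smul_apply, smul_eq_mul]
          rw [Finset.sum_add_distrib, Finset.mul_sum, Finset.mul_sum]
        rw [this]
        have hg : a * g S.card + b * g S.card = g S.card := by
          rw [← add_mul, hab, one_mul]
        nlinarith [mul_le_mul_of_nonneg_left h1 ha, mul_le_mul_of_nonneg_left h2 hb]
      · have : ∑ i, (a • u + b • v) i = a * ∑ i, u i + b * ∑ i, v i := by
          simp only [Pi.add_apply, Pi.smul_apply, smul_eq_mul]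
          rw [Finset.sum_add_distrib, Finset.mul_sum, Finset.mul_sum]
        rw [this, hu.2, hv.2]
        have hg : a * g n + b * g n = g n := by rw [← add_mul, hab, one_mul]
        linarith
    have := convexHull_min (fun y hy => by
      obtain ⟨σ, rfl⟩ := hy
      exact vertex_inP σ) hconv hx
    exact this
  · intro hx
    rw [hiff] at hx
    exact main_induction (nontight x).card x hx le_rfl
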